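/- For x ∈ Δ_n with support S of size k ≥ 2, the matrix T(A,x) is negative semidefinite if and only if yᵀAy ≤ 0 for every y ∈ R^n with Σ_i y_i = 0 and y_i = 0 whenever x_i = 0. Likewise, T(A,x) is negative definite if and only if yᵀAy < 0 for every nonzero such y. -/

import Mathlib

open Matrix


lemma sum_ext_aux {n m : ℕ} (e : Fin m → Fin n) (he : Function.Injective e)
    (f : Fin n → ℝ) (hf : ∀ i, i ∉ Set.range e → f i = 0) :
    ∑ i, f i = ∑ a, f (e a) := by
  have h1 : ∑ i ∈ Finset.univ.image e, f i = ∑ a, f (e a) :=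
    Finset.sum_image (fun a _ b _ h => he h)
  rw [← h1]
  refine (Finset.sum_subset (Finset.subset_univ _) ?_).symm
  intro i _ hi
  exact hf i (fun ⟨a, ha⟩ => hi (Finset.mem_image.mpr ⟨a, Finset.mem_univ a, ha⟩))

lemma quad_restrict_aux {n m : ℕ} (A : Matrix (Fin n) (Fin n) ℝ) (e : Fin m → Fin n)
    (he : Function.Injective e) (y : Fin n → ℝ) (hy : ∀ i, i ∉ Set.range e → y i = 0) :
    y ⬝ᵥ A.mulVec y = (fun a => y (e a)) ⬝ᵥ (A.submatrix e e).mulVec (fun a => y (e a)) := by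
  simp only [dotProduct, mulVec, submatrix_apply]
  rw [sum_ext_aux e he _ (fun i hi => by rw [hy i hi, zero_mul])]
  refine Finset.sum_congr rfl fun a _ => ?_
  rw [sum_ext_aux e he _ (fun j hj => by rw [hy j hj, mul_zero])]

lemma quad_eq_aux {m : ℕ} (C : Matrix (Fin (m+1)) (Fin (m+1)) ℝ) (B : Matrix (Fin m) (Fin m) ℝ)
    (hB : ∀ a b : Fin m, B a b = C a.castSucc b.castSucc + C (Fin.last m) (Fin.last m)
      - C a.castSucc (Fin.last m) - C (Fin.last m) b.castSucc)
    (w : Fin (m+1) → ℝ) (hw : ∑ a, w a = 0) :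
    w ⬝ᵥ C.mulVec w = (fun a => w a.castSucc) ⬝ᵥ B.mulVec (fun a => w a.castSucc) := by
  set L := Fin.last m with hL
  set D : Fin (m+1) → Fin (m+1) → ℝ := fun a b => C a b - C a L - C L b + C L L with hD
  have hLHS : w ⬝ᵥ C.mulVec w = ∑ a, ∑ b, w a * (C a b * w b) := by
    simp only [dotProduct, mulVec, Finset.mul_sum]
  have hstep : ∑ a, ∑ b, w a * w b * D a b = ∑ a, ∑ b, w a * (C a b * w b) := by
    have h1 : ∀ a, ∑ b, w a * w b * D a b
        = (∑ b, w a * (C a b * w b)) - w a * (∑ b, C L b * w b) := by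
      intro a
      have e1 : ∑ b, w a * w b * D a b
          = ∑ b, (w a * (C a b * w b) - (w a * C a L) * w b
              - w a * (C L b * w b) + (w a * C L L) * w b) :=
        Finset.sum_congr rfl fun b _ => by simp only [hD]; ring
      rw [e1, Finset.sum_add_distrib, Finset.sum_sub_distrib, Finset.sum_sub_distrib,
        ← Finset.mul_sum, ← Finset.mul_sum, ← Finset.mul_sum, ← Finset.mul_sum, hw]
      ring
    calc ∑ a, ∑ b, w a * w b * D a b
        = ∑ a, ((∑ b, w a * (C a b * w b)) - w a * (∑ b, C L b * w b)) :=
          Finset.sum_congr rfl fun a _ => h1 a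
      _ = (∑ a, ∑ b, w a * (C a b * w b)) - (∑ a, w a) * (∑ b, C L b * w b) := by
          rw [Finset.sum_sub_distrib, ← Finset.sum_mul]
      _ = _ := by rw [hw]; ring
  have hstep2 : ∑ a, ∑ b, w a * w b * D a b
      = ∑ a : Fin m, ∑ b : Fin m, w a.castSucc * w b.castSucc * B a b := by
    rw [Fin.sum_univ_castSucc]
    have hDL : ∀ b, D L b = 0 := fun b => by simp only [hD]; ring
    have hDL' : ∀ a, D a L = 0 := fun a => by simp only [hD]; ring
    simp only [← hL, hDL, mul_zero, Finset.sum_const_zero, add_zero]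
    refine Finset.sum_congr rfl fun a _ => ?_
    rw [Fin.sum_univ_castSucc]
    simp only [← hL, hDL', mul_zero, add_zero]
    exact Finset.sum_congr rfl fun b _ => by rw [hB]; simp only [hD]; ring
  have hRHS : (fun a => w a.castSucc) ⬝ᵥ B.mulVec (fun a => w a.castSucc)
      = ∑ a : Fin m, ∑ b : Fin m, w a.castSucc * w b.castSucc * B a b := by
    simp only [dotProduct, mulVec, Finset.mul_sum]
    exact Finset.sum_congr rfl fun a _ => Finset.sum_congr rfl fun b _ => by ring
  rw [hLHS, ← hstep, hstep2, hRHS]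

/-- for `x ∈ Δ_n` with support of size `k = m+1 ≥ 2`, the transformed matrix
`T(A,x)` is negative semidefinite iff `yᵀAy ≤ 0` for every `y` with `Σ_i y_i = 0` supported
on the support of `x`; and `T(A,x)` is negative definite iff `yᵀAy < 0` for every nonzero
such `y`. -/
theorem transformed_matrix_negSemidef_iff {n m : ℕ} (A : Matrix (Fin n) (Fin n) ℝ)
    (hA : A.IsSymm)
    (x : Fin n → ℝ) (hx : x ∈ stdSimplex ℝ (Fin n))
    (hm : 1 ≤ m)
    (e : Fin (m + 1) → Fin n) (he : Function.Injective e)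
    (hsupp : ∀ i, 0 < x i ↔ i ∈ Set.range e)
    (B : Matrix (Fin m) (Fin m) ℝ)
    (hB : ∀ a b : Fin m,
      B a b = A (e a.castSucc) (e b.castSucc) + A (e (Fin.last m)) (e (Fin.last m))
        - A (e a.castSucc) (e (Fin.last m)) - A (e (Fin.last m)) (e b.castSucc)) :
    ((∀ z : Fin m → ℝ, z ⬝ᵥ B.mulVec z ≤ 0) ↔
      (∀ y : Fin n → ℝ, (∑ i, y i) = 0 → (∀ i, x i = 0 → y i = 0) →
        y ⬝ᵥ A.mulVec y ≤ 0)) ∧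
    ((∀ z : Fin m → ℝ, z ≠ 0 → z ⬝ᵥ B.mulVec z < 0) ↔
      (∀ y : Fin n → ℝ, y ≠ 0 → (∑ i, y i) = 0 → (∀ i, x i = 0 → y i = 0) →
        y ⬝ᵥ A.mulVec y < 0)) := by
  have hx0 : ∀ i, i ∉ Set.range e → x i = 0 := fun i hi => by
    by_contra h
    exact hi ((hsupp i).1 (lt_of_le_of_ne (hx.1 i) (Ne.symm h)))
  have hxr : ∀ i, i ∈ Set.range e → x i ≠ 0 := fun i hi => ne_of_gt ((hsupp i).2 hi)
  have hCB : ∀ a b : Fin m, B a b = (A.submatrix e e) a.castSucc b.castSucc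
      + (A.submatrix e e) (Fin.last m) (Fin.last m)
      - (A.submatrix e e) a.castSucc (Fin.last m)
      - (A.submatrix e e) (Fin.last m) b.castSucc := by
    intro a b; simpa using hB a b
  -- given y satisfying the constraints, the quadratic forms agree
  have main1 : ∀ y : Fin n → ℝ, (∑ i, y i) = 0 → (∀ i, x i = 0 → y i = 0) →
      y ⬝ᵥ A.mulVec y
        = (fun a => y (e a.castSucc)) ⬝ᵥ B.mulVec (fun a => y (e a.castSucc)) := by
    intro y hsum h0
    have hy : ∀ i, i ∉ Set.range e → y i = 0 := fun i hi => h0 i (hx0 i hi)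
    have hw : ∑ a, (fun a => y (e a)) a = 0 := by
      rw [← sum_ext_aux e he y hy]; exact hsum
    rw [quad_restrict_aux A e he y hy, quad_eq_aux (A.submatrix e e) B hCB _ hw]
  -- for z nonzero and y the induced vector, nonzero transfers
  have nz1 : ∀ y : Fin n → ℝ, y ≠ 0 → (∑ i, y i) = 0 → (∀ i, x i = 0 → y i = 0) →
      (fun a => y (e a.castSucc)) ≠ (0 : Fin m → ℝ) := by
    intro y hy0 hsum h0 hz
    have hy : ∀ i, i ∉ Set.range e → y i = 0 := fun i hi => h0 i (hx0 i hi)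
    have hw : ∑ a, y (e a) = 0 := by rw [← sum_ext_aux e he y hy]; exact hsum
    have hcs : ∀ a : Fin m, y (e a.castSucc) = 0 := fun a => congrFun hz a
    have hlast : y (e (Fin.last m)) = 0 := by
      rw [Fin.sum_univ_castSucc] at hw
      simpa [hcs] using hw
    apply hy0
    funext i
    by_cases hi : i ∈ Set.range e
    · obtain ⟨a, rfl⟩ := hi
      cases a using Fin.lastCases with
      | last => exact hlast
      | cast a => exact hcs a
    · exact hy i hi
  -- construction of y from z
  have main2 : ∀ z : Fin m → ℝ, ∃ y : Fin n → ℝ, (∑ i, y i) = 0 ∧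
      (∀ i, x i = 0 → y i = 0) ∧ (z ≠ 0 → y ≠ 0) ∧
      y ⬝ᵥ A.mulVec y = z ⬝ᵥ B.mulVec z := by
    intro z
    set w : Fin (m + 1) → ℝ := Fin.snoc z (-(∑ a, z a)) with hwdef
    set y : Fin n → ℝ := Function.extend e w (fun _ => (0:ℝ)) with hydef
    have hye : ∀ a, y (e a) = w a := fun a => he.extend_apply w (fun _ => (0:ℝ)) a
    have hy : ∀ i, i ∉ Set.range e → y i = 0 := by
      intro i hi
      rw [hydef, Function.extend_apply' w (fun _ => (0:ℝ)) i (by simpa [Set.mem_range] using hi)]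
    have hw : ∑ a, w a = 0 := by
      rw [Fin.sum_univ_castSucc]
      simp [hwdef]
    have hsum : ∑ i, y i = 0 := by
      rw [sum_ext_aux e he y hy]
      simpa [hye] using hw
    have h0 : ∀ i, x i = 0 → y i = 0 := by
      intro i hxi
      by_cases hi : i ∈ Set.range e
      · exact absurd hxi (hxr i hi)
      · exact hy i hi
    refine ⟨y, hsum, h0, ?_, ?_⟩
    · intro hz hy0
      apply hz
      funext a
      have := hye a.castSucc
      rw [hy0] at this
      simpa [hwdef, Fin.snoc_castSucc] using this.symm
    · rw [quad_restrict_aux A e he y hy,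
        quad_eq_aux (A.submatrix e e) B hCB _ (by simpa [hye] using hw)]
      congr 1 <;> (funext a; simp [hye, hwdef, Fin.snoc_castSucc])
  constructor
  · constructor
    · intro h y hsum h0
      rw [main1 y hsum h0]
      exact h _
    · intro h z
      obtain ⟨y, hsum, h0, -, hq⟩ := main2 z
      rw [← hq]
      exact h y hsum h0
  · constructor
    · intro h y hy0 hsum h0
      rw [main1 y hsum h0]
      exact h _ (nz1 y hy0 hsum h0)
    · intro h z hz
      obtain ⟨y, hsum, h0, hyz, hq⟩ := main2 z
      rw [← hq]
      exact h y (hyz hz) hsum h0
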